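/- For positive reals a, b, c, the matrices D₁ and D₂ (defined as the 6×6 weighted Laplacians with entries as above) are positive definite, and ⟨D₁⁻¹v, v⟩ - ⟨D₂⁻¹v, v⟩ = (a-b)(a-c)(b-c) · 56(bc + a(b+c)) / d(a,b,c), where v = (1,1,1,1,1,1)ᵀ and d(a,b,c) = 32a⁴(b+c)² + 8b²c²(4b² + 9bc + 4c²) + 8abc(b+c)(8b² + 23bc + 8c²) + 8a³(b+c)(9b² + 22bc + 9c²) + a²(32b⁴ + 248b³c + 439b²c² + 248bc³ + 32c⁴). -/

import Mathlib

open Matrix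

private lemma cv_1_1 {α : Type*} (x : α) (u : Fin 1 → α) : Matrix.vecCons x u 1 = u 0 := rfl
private lemma cv_2_1 {α : Type*} (x : α) (u : Fin 2 → α) : Matrix.vecCons x u 1 = u 0 := rfl
private lemma cv_2_2 {α : Type*} (x : α) (u : Fin 2 → α) : Matrix.vecCons x u 2 = u 1 := rfl
private lemma cv_3_1 {α : Type*} (x : α) (u : Fin 3 → α) : Matrix.vecCons x u 1 = u 0 := rfl
private lemma cv_3_2 {α : Type*} (x : α) (u : Fin 3 → α) : Matrix.vecCons x u 2 = u 1 := rfl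
private lemma cv_3_3 {α : Type*} (x : α) (u : Fin 3 → α) : Matrix.vecCons x u 3 = u 2 := rfl
private lemma cv_4_1 {α : Type*} (x : α) (u : Fin 4 → α) : Matrix.vecCons x u 1 = u 0 := rfl
private lemma cv_4_2 {α : Type*} (x : α) (u : Fin 4 → α) : Matrix.vecCons x u 2 = u 1 := rfl
private lemma cv_4_3 {α : Type*} (x : α) (u : Fin 4 → α) : Matrix.vecCons x u 3 = u 2 := rfl
private lemma cv_4_4 {α : Type*} (x : α) (u : Fin 4 → α) : Matrix.vecCons x u 4 = u 3 := rfl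
private lemma cv_5_1 {α : Type*} (x : α) (u : Fin 5 → α) : Matrix.vecCons x u 1 = u 0 := rfl
private lemma cv_5_2 {α : Type*} (x : α) (u : Fin 5 → α) : Matrix.vecCons x u 2 = u 1 := rfl
private lemma cv_5_3 {α : Type*} (x : α) (u : Fin 5 → α) : Matrix.vecCons x u 3 = u 2 := rfl
private lemma cv_5_4 {α : Type*} (x : α) (u : Fin 5 → α) : Matrix.vecCons x u 4 = u 3 := rfl
private lemma cv_5_5 {α : Type*} (x : α) (u : Fin 5 → α) : Matrix.vecCons x u 5 = u 4 := rfl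
private lemma fmk0 : (⟨0, by omega⟩ : Fin 6) = 0 := rfl
private lemma fmk1 : (⟨1, by omega⟩ : Fin 6) = 1 := rfl
private lemma fmk2 : (⟨2, by omega⟩ : Fin 6) = 2 := rfl
private lemma fmk3 : (⟨3, by omega⟩ : Fin 6) = 3 := rfl
private lemma fmk4 : (⟨4, by omega⟩ : Fin 6) = 4 := rfl
private lemma fmk5 : (⟨5, by omega⟩ : Fin 6) = 5 := rfl

set_option maxHeartbeats 1000000 in
private lemma posdef_aux (a b c : ℝ) (ha : 0 < a) (hb : 0 < b) (hc : 0 < c) :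
    (!![a+c, 0, 0, -c/2, 0, 0;
       0, a+b, 0, 0, -a/2, 0;
       0, 0, b+c, 0, 0, -b/2;
       -c/2, 0, 0, b+c, -c/2, -b/2;
       0, -a/2, 0, -c/2, a+c, -a/2;
       0, 0, -b/2, -b/2, -a/2, a+b] : Matrix (Fin 6) (Fin 6) ℝ).PosDef := by
  rw [Matrix.posDef_iff_dotProduct_mulVec]
  constructor
  · rw [Matrix.IsHermitian, ← Matrix.ext_iff]
    intro i j
    fin_cases i <;> fin_cases j <;> rfl
  · intro x hx
    have hex : ∃ i, x i ≠ 0 := by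
      by_contra h
      push_neg at h
      exact hx (funext h)
    obtain ⟨i, hi⟩ := hex
    simp only [dotProduct, Matrix.mulVec, Fin.sum_univ_six, Pi.star_apply, star_trivial, Matrix.cons_val', Matrix.cons_val_zero, Matrix.of_apply, Matrix.empty_val', Matrix.cons_val_fin_one, Pi.smul_apply, smul_eq_mul, cv_1_1, cv_2_1, cv_2_2, cv_3_1, cv_3_2, cv_3_3, cv_4_1, cv_4_2, cv_4_3, cv_4_4, cv_5_1, cv_5_2, cv_5_3, cv_5_4, cv_5_5, fmk0, fmk1, fmk2, fmk3, fmk4, fmk5]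
    fin_cases i <;> (try simp only [fmk0, fmk1, fmk2, fmk3, fmk4, fmk5] at hi) <;>
    nlinarith [mul_nonneg hc.le (sq_nonneg (x 0 - x 3)), mul_nonneg ha.le (sq_nonneg (x 1 - x 4)),
      mul_nonneg hb.le (sq_nonneg (x 2 - x 5)), mul_nonneg hc.le (sq_nonneg (x 3 - x 4)),
      mul_nonneg hb.le (sq_nonneg (x 3 - x 5)), mul_nonneg ha.le (sq_nonneg (x 4 - x 5)),
      mul_nonneg ha.le (sq_nonneg (x 0)), mul_nonneg hc.le (sq_nonneg (x 0)),
      mul_nonneg ha.le (sq_nonneg (x 1)), mul_nonneg hb.le (sq_nonneg (x 1)),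
      mul_nonneg hb.le (sq_nonneg (x 2)), mul_nonneg hc.le (sq_nonneg (x 2)),
      mul_nonneg hb.le (sq_nonneg (x 3)), mul_nonneg hc.le (sq_nonneg (x 4)),
      mul_nonneg ha.le (sq_nonneg (x 5)),
      mul_pos ha (mul_self_pos.mpr hi), mul_pos hb (mul_self_pos.mpr hi),
      mul_pos hc (mul_self_pos.mpr hi)]

set_option maxHeartbeats 2000000 in
theorem combinatorial_torsion_difference (a b c : ℝ) (ha : 0 < a) (hb : 0 < b) (hc : 0 < c)
    (D₁ D₂ : Matrix (Fin 6) (Fin 6) ℝ)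
    (hD₁ : D₁ = !![a+c, 0, 0, -c/2, 0, 0;
       0, a+b, 0, 0, -a/2, 0;
       0, 0, b+c, 0, 0, -b/2;
       -c/2, 0, 0, b+c, -c/2, -b/2;
       0, -a/2, 0, -c/2, a+c, -a/2;
       0, 0, -b/2, -b/2, -a/2, a+b])
    (hD₂ : D₂ = !![a+b, 0, 0, -b/2, 0, 0;
       0, a+c, 0, 0, -a/2, 0;
       0, 0, b+c, 0, 0, -c/2;
       -b/2, 0, 0, b+c, -b/2, -c/2;
       0, -a/2, 0, -b/2, a+b, -a/2;
       0, 0, -c/2, -c/2, -a/2, a+c])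
    (v : Fin 6 → ℝ) (hv : v = fun _ => 1) :
    D₁.PosDef ∧ D₂.PosDef ∧
    (D₁⁻¹ *ᵥ v) ⬝ᵥ v - (D₂⁻¹ *ᵥ v) ⬝ᵥ v =
      (a - b) * (a - c) * (b - c) * (56 * (b*c + a*(b+c))) /
        (32*a^4*(b+c)^2 + 8*b^2*c^2*(4*b^2 + 9*b*c + 4*c^2)
          + 8*a*b*c*(b+c)*(8*b^2 + 23*b*c + 8*c^2)
          + 8*a^3*(b+c)*(9*b^2 + 22*b*c + 9*c^2)
          + a^2*(32*b^4 + 248*b^3*c + 439*b^2*c^2 + 248*b*c^3 + 32*c^4)) := by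
  have hpd1 : D₁.PosDef := hD₁ ▸ posdef_aux a b c ha hb hc
  have hpd2 : D₂.PosDef := by
    have h := posdef_aux a c b ha hc hb
    rw [hD₂]
    convert h using 2 <;> ring
  refine ⟨hpd1, hpd2, ?_⟩
  have hden_ne : (32*a^4*(b+c)^2 + 8*b^2*c^2*(4*b^2 + 9*b*c + 4*c^2)
          + 8*a*b*c*(b+c)*(8*b^2 + 23*b*c + 8*c^2)
          + 8*a^3*(b+c)*(9*b^2 + 22*b*c + 9*c^2)
          + a^2*(32*b^4 + 248*b^3*c + 439*b^2*c^2 + 248*b*c^3 + 32*c^4)) ≠ 0 := by positivity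
  set den : ℝ := (32*a^4*(b+c)^2 + 8*b^2*c^2*(4*b^2 + 9*b*c + 4*c^2)
          + 8*a*b*c*(b+c)*(8*b^2 + 23*b*c + 8*c^2)
          + 8*a^3*(b+c)*(9*b^2 + 22*b*c + 9*c^2)
          + a^2*(32*b^4 + 248*b^3*c + 439*b^2*c^2 + 248*b*c^3 + 32*c^4)) with hden
  set P₁ : Fin 6 → ℝ := ![32*a^3*b^2 + 80*a^3*b*c + 48*a^3*c^2 + 72*a^2*b^3 + 288*a^2*b^2*c + 332*a^2*b*c^2 + 112*a^2*c^3 + 32*a*b^4 + 232*a*b^3*c + 426*a*b^2*c^2 + 224*a*b*c^3 + 32*b^4*c + 144*b^3*c^2 + 112*b^2*c^3, 112*a^3*b^2 + 224*a^3*b*c + 112*a^3*c^2 + 48*a^2*b^3 + 332*a^2*b^2*c + 426*a^2*b*c^2 + 144*a^2*c^3 + 80*a*b^3*c + 288*a*b^2*c^2 + 232*a*b*c^3 + 32*a*c^4 + 32*b^3*c^2 + 72*b^2*c^3 + 32*b*c^4, 32*a^4*b + 32*a^4*c + 144*a^3*b^2 + 232*a^3*b*c + 72*a^3*c^2 + 112*a^2*b^3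 + 426*a^2*b^2*c + 288*a^2*b*c^2 + 32*a^2*c^3 + 224*a*b^3*c + 332*a*b^2*c^2 + 80*a*b*c^3 + 112*b^3*c^2 + 48*b^2*c^3, 32*a^4*b + 32*a^4*c + 144*a^3*b^2 + 328*a^3*b*c + 176*a^3*c^2 + 112*a^2*b^3 + 550*a^2*b^2*c + 616*a^2*b*c^2 + 160*a^2*c^3 + 256*a*b^3*c + 580*a*b^2*c^2 + 320*a*b*c^3 + 144*b^3*c^2 + 160*b^2*c^3, 160*a^3*b^2 + 320*a^3*b*c + 160*a^3*c^2 + 176*a^2*b^3 + 616*a^2*b^2*c + 580*a^2*b*c^2 + 144*a^2*c^3 + 32*a*b^4 + 328*a*b^3*c + 550*a*b^2*c^2 + 256*a*b*c^3 + 32*b^4*c + 144*b^3*c^2 + 112*b^2*c^3, 144*a^3*b^2 + 256*a^3*b*c + 112*a^3*c^2 + 160*a^2*b^3 + 580*a^2*b^2*c + 550*a^2*b*c^2 + 144*a^2*c^3 + 320*a*b^3*c + 616*a*b^2*c^2 + 328*a*b*c^3 + 32*a*c^4 + 160*b^3*c^2 + 176*b^2*c^3 + 32*b*c^4] with hP₁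
  set P₂ : Fin 6 → ℝ := ![48*a^3*b^2 + 80*a^3*b*c + 32*a^3*c^2 + 112*a^2*b^3 + 332*a^2*b^2*c + 288*a^2*b*c^2 + 72*a^2*c^3 + 224*a*b^3*c + 426*a*b^2*c^2 + 232*a*b*c^3 + 32*a*c^4 + 112*b^3*c^2 + 144*b^2*c^3 + 32*b*c^4, 112*a^3*b^2 + 224*a^3*b*c + 112*a^3*c^2 + 144*a^2*b^3 + 426*a^2*b^2*c + 332*a^2*b*c^2 + 48*a^2*c^3 + 32*a*b^4 + 232*a*b^3*c + 288*a*b^2*c^2 + 80*a*b*c^3 + 32*b^4*c + 72*b^3*c^2 + 32*b^2*c^3, 32*a^4*b + 32*a^4*c + 72*a^3*b^2 + 232*a^3*b*c + 144*a^3*c^2 + 32*a^2*b^3 + 288*a^2*b^2*c + 426*a^2*b*c^2 + 112*a^2*c^3 + 80*a*b^3*c + 332*a*b^2*c^2 + 224*a*b*c^3 + 48*b^3*c^2 + 112*b^2*c^3, 32*a^4*b + 32*a^4*c + 176*a^3*b^2 + 328*a^3*b*c + 144*a^3*c^2 + 160*a^2*b^3 + 616*a^2*b^2*c + 550*a^2*b*c^2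 + 112*a^2*c^3 + 320*a*b^3*c + 580*a*b^2*c^2 + 256*a*b*c^3 + 160*b^3*c^2 + 144*b^2*c^3, 160*a^3*b^2 + 320*a^3*b*c + 160*a^3*c^2 + 144*a^2*b^3 + 580*a^2*b^2*c + 616*a^2*b*c^2 + 176*a^2*c^3 + 256*a*b^3*c + 550*a*b^2*c^2 + 328*a*b*c^3 + 32*a*c^4 + 112*b^3*c^2 + 144*b^2*c^3 + 32*b*c^4, 112*a^3*b^2 + 256*a^3*b*c + 144*a^3*c^2 + 144*a^2*b^3 + 550*a^2*b^2*c + 580*a^2*b*c^2 + 160*a^2*c^3 + 32*a*b^4 + 328*a*b^3*c + 616*a*b^2*c^2 + 320*a*b*c^3 + 32*b^4*c + 176*b^3*c^2 + 160*b^2*c^3] with hP₂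
  have h1 : D₁ *ᵥ P₁ = den • v := by
    funext i
    rw [hD₁, hv, hP₁, hden]
    fin_cases i <;>
      (simp only [dotProduct, Matrix.mulVec, Fin.sum_univ_six, Pi.star_apply, star_trivial, Matrix.cons_val', Matrix.cons_val_zero, Matrix.of_apply, Matrix.empty_val', Matrix.cons_val_fin_one, Pi.smul_apply, smul_eq_mul, cv_1_1, cv_2_1, cv_2_2, cv_3_1, cv_3_2, cv_3_3, cv_4_1, cv_4_2, cv_4_3, cv_4_4, cv_5_1, cv_5_2, cv_5_3, cv_5_4, cv_5_5, fmk0, fmk1, fmk2, fmk3, fmk4, fmk5]; ring)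
  have h2 : D₂ *ᵥ P₂ = den • v := by
    funext i
    rw [hD₂, hv, hP₂, hden]
    fin_cases i <;>
      (simp only [dotProduct, Matrix.mulVec, Fin.sum_univ_six, Pi.star_apply, star_trivial, Matrix.cons_val', Matrix.cons_val_zero, Matrix.of_apply, Matrix.empty_val', Matrix.cons_val_fin_one, Pi.smul_apply, smul_eq_mul, cv_1_1, cv_2_1, cv_2_2, cv_3_1, cv_3_2, cv_3_3, cv_4_1, cv_4_2, cv_4_3, cv_4_4, cv_5_1, cv_5_2, cv_5_3, cv_5_4, cv_5_5, fmk0, fmk1, fmk2, fmk3, fmk4, fmk5]; ring)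
  have hinv₁ : D₁⁻¹ *ᵥ v = den⁻¹ • P₁ := by
    have e1 : P₁ = den • (D₁⁻¹ *ᵥ v) := by
      conv_lhs => rw [← Matrix.one_mulVec P₁, ← Matrix.nonsing_inv_mul D₁ hpd1.det_pos.ne'.isUnit,
        ← Matrix.mulVec_mulVec, h1, Matrix.mulVec_smul]
    rw [e1, smul_smul, inv_mul_cancel₀ hden_ne, one_smul]
  have hinv₂ : D₂⁻¹ *ᵥ v = den⁻¹ • P₂ := by
    have e2 : P₂ = den • (D₂⁻¹ *ᵥ v) := by
      conv_lhs => rw [← Matrix.one_mulVec P₂, ← Matrix.nonsing_inv_mul D₂ hpd2.det_pos.ne'.isUnit,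
        ← Matrix.mulVec_mulVec, h2, Matrix.mulVec_smul]
    rw [e2, smul_smul, inv_mul_cancel₀ hden_ne, one_smul]
  rw [hinv₁, hinv₂, hv, hP₁, hP₂]
  simp only [dotProduct, Matrix.mulVec, Fin.sum_univ_six, Pi.star_apply, star_trivial, Matrix.cons_val', Matrix.cons_val_zero, Matrix.of_apply, Matrix.empty_val', Matrix.cons_val_fin_one, Pi.smul_apply, smul_eq_mul, cv_1_1, cv_2_1, cv_2_2, cv_3_1, cv_3_2, cv_3_3, cv_4_1, cv_4_2, cv_4_3, cv_4_4, cv_5_1, cv_5_2, cv_5_3, cv_5_4, cv_5_5, fmk0, fmk1, fmk2, fmk3, fmk4, fmk5]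
  rw [hden]
  field_simp
  ring
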